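/- Let T be a transit cluster in a DAG G = (V,E) and let G' be the graph induced by clustering T into a single vertex t. Then a set S ⊆ V \ T is a transit cluster in G if and only if S is a transit cluster in G'. (Invariance of transit clusters.) -/

import Mathlib

variable {α : Type*}

/-- All edges lie within the vertex set `V`. -/
def EdgesIn (V : Set α) (E : α → α → Prop) : Prop :=
  ∀ u v, E u v → u ∈ V ∧ v ∈ V

/-- The edge relation has no directed cycles. -/
def Acyclic (E : α → α → Prop) : Prop :=
  ∀ v, ¬ Relation.TransGen E v v

/-- A finite directed acyclic graph on vertex set `V`. -/
def IsDAG (V : Set α) (E : α → α → Prop) : Prop :=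
  V.Finite ∧ EdgesIn V E ∧ Acyclic E

/-- Receivers of `T`: members of `T` with a parent outside `T`. -/
def recs (E : α → α → Prop) (T : Set α) : Set α :=
  {v | v ∈ T ∧ ∃ u, u ∉ T ∧ E u v}

/-- Emitters of `T`: members of `T` with a child outside `T`. -/
def emis (E : α → α → Prop) (T : Set α) : Set α :=
  {v | v ∈ T ∧ ∃ u, u ∉ T ∧ E v u}

/-- Edges of `G[T^=]`: the subgraph induced by `T` with incoming edges of
receivers and outgoing edges of emitters removed. -/
def CutEdge (E : α → α → Prop) (T : Set α) (u v : α) : Prop :=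
  u ∈ T ∧ v ∈ T ∧ E u v ∧ v ∉ recs E T ∧ u ∉ emis E T

/-- Undirected reachability with respect to an edge relation. -/
def UndirReach (E : α → α → Prop) (u v : α) : Prop :=
  Relation.ReflTransGen (fun a b => E a b ∨ E b a) u v

/-- `T` is a transit cluster in the graph `(V, E)`. -/
def IsTransitCluster (V : Set α) (E : α → α → Prop) (T : Set α) : Prop :=
  T.Nonempty ∧ T ⊂ V ∧
  (∀ r₁ ∈ recs E T, ∀ r₂ ∈ recs E T,
    {u | u ∉ T ∧ E u r₁} = {u | u ∉ T ∧ E u r₂}) ∧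
  (∀ e₁ ∈ emis E T, ∀ e₂ ∈ emis E T,
    {u | u ∉ T ∧ E e₁ u} = {u | u ∉ T ∧ E e₂ u}) ∧
  (∀ x ∈ T, ∃ w, (w ∈ recs E T ∨ w ∈ emis E T) ∧ UndirReach (CutEdge E T) x w) ∧
  ((emis E T).Nonempty → ∀ r ∈ recs E T, ∃ e ∈ emis E T, Relation.ReflTransGen E r e) ∧
  ((recs E T).Nonempty → ∀ e ∈ emis E T, ∃ r ∈ recs E T, Relation.ReflTransGen E r e)

/-- Vertex set of the graph obtained by clustering `T` into the new vertex `t`. -/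
def ClusterVerts (V T : Set α) (t : α) : Set α := (V \ T) ∪ {t}

/-- Edge relation of the graph obtained by clustering `T` into the new vertex `t`:
edges not touching `T` are kept, the parents of `t` are the external parents of
`recs T`, and the children of `t` are the external children of `emis T`. -/
def ClusterEdge (E : α → α → Prop) (T : Set α) (t : α) (u v : α) : Prop :=
  (u ∉ T ∧ v ∉ T ∧ E u v) ∨
  (u ∉ T ∧ u ≠ t ∧ v = t ∧ ∃ r ∈ recs E T, E u r) ∨
  (u = t ∧ v ∉ T ∧ v ≠ t ∧ ∃ e ∈ emis E T, E e v)

/-- A transit component: a transit cluster that is connected (undirectedly)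
in the subgraph it induces. -/
def IsTransitComponent (V : Set α) (E : α → α → Prop) (T : Set α) : Prop :=
  IsTransitCluster V E T ∧
  ∀ u ∈ T, ∀ v ∈ T, UndirReach (fun a b => a ∈ T ∧ b ∈ T ∧ E a b) u v


/-- Auxiliary: an `E`-path between vertices outside `T` transfers to the
clustered graph; paths starting inside `T` transfer to paths from `t`. -/
private lemma reach_to_cluster {V : Set α} {E : α → α → Prop} {T : Set α} {t : α}
    (hE : EdgesIn V E) (ht : t ∉ V)
    {a b : α} (h : Relation.ReflTransGen E a b) (hb : b ∉ T) :
    (a ∉ T → Relation.ReflTransGen (ClusterEdge E T t) a b) ∧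
    (a ∈ T → Relation.ReflTransGen (ClusterEdge E T t) t b) := by
  induction h using Relation.ReflTransGen.head_induction_on with
  | refl => exact ⟨fun _ => Relation.ReflTransGen.refl, fun haT => absurd haT hb⟩
  | @head a c hac hcb ih =>
    constructor
    · intro haT
      by_cases hcT : c ∈ T
      · have hat : ClusterEdge E T t a t :=
          Or.inr (Or.inl ⟨haT, fun h => ht (h ▸ (hE _ _ hac).1), rfl,
            c, ⟨hcT, a, haT, hac⟩, hac⟩)
        exact Relation.ReflTransGen.head hat (ih.2 hcT)
      · exact Relation.ReflTransGen.head (Or.inl ⟨haT, hcT, hac⟩) (ih.1 hcT)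
    · intro haT
      by_cases hcT : c ∈ T
      · exact ih.2 hcT
      · have htc : ClusterEdge E T t t c :=
          Or.inr (Or.inr ⟨rfl, hcT, fun h => ht (h ▸ (hE _ _ hac).2),
            a, ⟨haT, c, hcT, hac⟩, hac⟩)
        exact Relation.ReflTransGen.head htc (ih.1 hcT)

/-- Auxiliary: a path in the clustered graph transfers back to an `E`-path. -/
private lemma reach_from_cluster {V : Set α} {E : α → α → Prop} {T : Set α} {t : α}
    (hE : EdgesIn V E) (ht : t ∉ V)
    (hem : ∀ e₁ ∈ emis E T, ∀ e₂ ∈ emis E T,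
      {u | u ∉ T ∧ E e₁ u} = {u | u ∉ T ∧ E e₂ u})
    (hre : (emis E T).Nonempty → ∀ r ∈ recs E T,
      ∃ e ∈ emis E T, Relation.ReflTransGen E r e)
    {a b : α} (h : Relation.ReflTransGen (ClusterEdge E T t) a b) (hb : b ≠ t) :
    (a ≠ t → Relation.ReflTransGen E a b) ∧
    (a = t → ∀ e ∈ emis E T, Relation.ReflTransGen E e b) := by
  induction h using Relation.ReflTransGen.head_induction_on with
  | refl => exact ⟨fun _ => Relation.ReflTransGen.refl, fun h => absurd h hb⟩
  | @head a c hac hcb ih =>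
    constructor
    · intro hat
      rcases hac with ⟨haT, hcT, hac'⟩ | ⟨haT, hat', rfl, r, hrR, har⟩ |
          ⟨rfl, hcT, hct, e, heE, hec⟩
      · exact Relation.ReflTransGen.head hac'
          (ih.1 (fun h => ht (h ▸ (hE _ _ hac').2)))
      · -- edge a → t : find an emitter reachable from the receiver r
        have hne : (emis E T).Nonempty := by
          rcases hcb.cases_head with heq | ⟨d, htd, _⟩
          · exact absurd heq.symm hb
          · rcases htd with ⟨htT, _, hed⟩ | ⟨_, hne, _, _⟩ | ⟨_, _, _, e₀, he₀, _⟩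
            · exact absurd (hE _ _ hed).1 ht
            · exact absurd rfl hne
            · exact ⟨e₀, he₀⟩
        obtain ⟨e, heE, hre'⟩ := hre hne r hrR
        exact Relation.ReflTransGen.head har (hre'.trans (ih.2 rfl e heE))
      · exact absurd rfl hat
    · intro hat
      subst hat
      rcases hac with ⟨haT, hcT, hac'⟩ | ⟨_, hne, _, _⟩ |
          ⟨_, hcT, hct, e₀, he₀, he₀c⟩
      · exact absurd (hE _ _ hac').1 ht
      · exact absurd rfl hne
      · intro e he
        have hmem : c ∈ {u | u ∉ T ∧ E e u} := (hem e₀ he₀ e he) ▸ ⟨hcT, he₀c⟩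
        exact Relation.ReflTransGen.head hmem.2 (ih.1 hct)

/-- invariance of transit clusters under clustering of a disjoint
transit cluster. -/
theorem transit_cluster_invariance
    (V : Set α) (E : α → α → Prop) (T S : Set α) (t : α)
    (hdag : IsDAG V E)
    (ht : t ∉ V)
    (hT : IsTransitCluster V E T)
    (hS : S ⊆ V \ T) :
    IsTransitCluster V E S ↔
      IsTransitCluster (ClusterVerts V T t) (ClusterEdge E T t) S := by
  obtain ⟨hfin, hE, hacy⟩ := hdag
  obtain ⟨hTne, hTV, hTrec, hTemi, hTcon, hTre, hTer⟩ := hT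
  have hSsub : ∀ {x}, x ∈ S → x ∉ T := fun hx => (hS hx).2
  have hSV : ∀ {x}, x ∈ S → x ∈ V := fun hx => (hS hx).1
  have hSt : ∀ {x}, x ∈ S → x ≠ t := fun hx h => ht (h ▸ hSV hx)
  have htS : t ∉ S := fun h => ht (hSV h)
  -- receivers coincide
  have hrec : recs (ClusterEdge E T t) S = recs E S := by
    ext v
    constructor
    · rintro ⟨hv, u, hu, hedge⟩
      rcases hedge with ⟨huT, hvT, huv⟩ | ⟨huT, hut, rfl, r, hrR, hur⟩ |
          ⟨rfl, hvT, hvt, e, heE, hev⟩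
      · exact ⟨hv, u, hu, huv⟩
      · exact absurd hv htS
      · exact ⟨hv, e, fun hh => hSsub hh heE.1, hev⟩
    · rintro ⟨hv, u, hu, huv⟩
      by_cases huT : u ∈ T
      · exact ⟨hv, t, htS,
          Or.inr (Or.inr ⟨rfl, hSsub hv, hSt hv, u, ⟨huT, v, hSsub hv, huv⟩, huv⟩)⟩
      · exact ⟨hv, u, hu, Or.inl ⟨huT, hSsub hv, huv⟩⟩
  -- emitters coincide
  have hemi : emis (ClusterEdge E T t) S = emis E S := by
    ext v
    constructor
    · rintro ⟨hv, u, hu, hedge⟩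
      rcases hedge with ⟨hvT, huT, hvu⟩ | ⟨hvT, hvt, rfl, r, hrR, hvr⟩ |
          ⟨rfl, huT, hut, e, heE, heu⟩
      · exact ⟨hv, u, hu, hvu⟩
      · exact ⟨hv, r, fun hh => hSsub hh hrR.1, hvr⟩
      · exact absurd hv htS
    · rintro ⟨hv, u, hu, hvu⟩
      by_cases huT : u ∈ T
      · exact ⟨hv, t, htS,
          Or.inr (Or.inl ⟨hSsub hv, hSt hv, rfl, u, ⟨huT, v, hSsub hv, hvu⟩, hvu⟩)⟩
      · exact ⟨hv, u, hu, Or.inl ⟨hSsub hv, huT, hvu⟩⟩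
  -- cut edges coincide
  have hcut : ∀ u v, CutEdge (ClusterEdge E T t) S u v ↔ CutEdge E S u v := by
    intro u v
    constructor
    · rintro ⟨huS, hvS, hedge, hvr, hue⟩
      refine ⟨huS, hvS, ?_, hrec ▸ hvr, hemi ▸ hue⟩
      rcases hedge with ⟨_, _, huv⟩ | ⟨_, _, rfl, _⟩ | ⟨rfl, _, _, _⟩
      · exact huv
      · exact absurd hvS htS
      · exact absurd huS htS
    · rintro ⟨huS, hvS, huv, hvr, hue⟩
      exact ⟨huS, hvS, Or.inl ⟨hSsub huS, hSsub hvS, huv⟩,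
        hrec.symm ▸ hvr, hemi.symm ▸ hue⟩
  -- reachability coincides for endpoints in S
  have hreach : ∀ a ∈ S, ∀ b ∈ S,
      (Relation.ReflTransGen E a b ↔ Relation.ReflTransGen (ClusterEdge E T t) a b) :=
    fun a ha b hb =>
      ⟨fun h => (reach_to_cluster hE ht h (hSsub hb)).1 (hSsub ha),
       fun h => (reach_from_cluster hE ht hTemi hTre h (hSt hb)).1 (hSt ha)⟩
  -- parent sets: E' version from E version
  have hpfwd : ∀ r₁ r₂, r₁ ∈ S → r₂ ∈ S →
      {u | u ∉ S ∧ E u r₁} ⊆ {u | u ∉ S ∧ E u r₂} →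
      {u | u ∉ S ∧ ClusterEdge E T t u r₁} ⊆ {u | u ∉ S ∧ ClusterEdge E T t u r₂} := by
    rintro r₁ r₂ h1 h2 hsub x ⟨hx, hedge⟩
    rcases hedge with ⟨hxT, _, hxr⟩ | ⟨_, _, heq, _⟩ | ⟨rfl, _, _, e, heE, her⟩
    · exact ⟨hx, Or.inl ⟨hxT, hSsub h2, (hsub ⟨hx, hxr⟩).2⟩⟩
    · exact absurd heq (hSt h1)
    · have heS : e ∉ S := fun hh => hSsub hh heE.1
      have her2 : E e r₂ := (hsub ⟨heS, her⟩).2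
      exact ⟨hx, Or.inr (Or.inr ⟨rfl, hSsub h2, hSt h2,
        e, ⟨heE.1, r₂, hSsub h2, her2⟩, her2⟩)⟩
  -- parent sets: E version from E' version
  have hpbwd : ∀ r₁ r₂, r₁ ∈ S → r₂ ∈ S →
      {u | u ∉ S ∧ ClusterEdge E T t u r₁} ⊆ {u | u ∉ S ∧ ClusterEdge E T t u r₂} →
      {u | u ∉ S ∧ E u r₁} ⊆ {u | u ∉ S ∧ E u r₂} := by
    rintro r₁ r₂ h1 h2 hsub x ⟨hx, hxr⟩
    by_cases hxT : x ∈ T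
    · have hx1 : x ∈ emis E T := ⟨hxT, r₁, hSsub h1, hxr⟩
      have h2' : ClusterEdge E T t t r₂ :=
        (hsub ⟨htS, Or.inr (Or.inr ⟨rfl, hSsub h1, hSt h1, x, hx1, hxr⟩)⟩).2
      rcases h2' with ⟨_, _, htr⟩ | ⟨_, hne, _, _⟩ | ⟨_, _, _, e, heE, her⟩
      · exact absurd (hE _ _ htr).1 ht
      · exact absurd rfl hne
      · have hmem : r₂ ∈ {u | u ∉ T ∧ E x u} :=
          (hTemi e heE x hx1) ▸ (⟨hSsub h2, her⟩ : r₂ ∈ {u | u ∉ T ∧ E e u})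
        exact ⟨hx, hmem.2⟩
    · have h2' : ClusterEdge E T t x r₂ :=
        (hsub ⟨hx, Or.inl ⟨hxT, hSsub h1, hxr⟩⟩).2
      rcases h2' with ⟨_, _, hxr2⟩ | ⟨_, _, heq, _⟩ | ⟨heq, _, _, _⟩
      · exact ⟨hx, hxr2⟩
      · exact absurd heq (hSt h2)
      · exact absurd (hE _ _ hxr).1 (heq ▸ ht)
  -- child sets: E' version from E version
  have hcfwd : ∀ e₁ e₂, e₁ ∈ S → e₂ ∈ S →
      {u | u ∉ S ∧ E e₁ u} ⊆ {u | u ∉ S ∧ E e₂ u} →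
      {u | u ∉ S ∧ ClusterEdge E T t e₁ u} ⊆ {u | u ∉ S ∧ ClusterEdge E T t e₂ u} := by
    rintro e₁ e₂ h1 h2 hsub x ⟨hx, hedge⟩
    rcases hedge with ⟨_, hxT, hex⟩ | ⟨_, _, rfl, r, hrR, her⟩ | ⟨heq, _, _, _⟩
    · exact ⟨hx, Or.inl ⟨hSsub h2, hxT, (hsub ⟨hx, hex⟩).2⟩⟩
    · have hrS : r ∉ S := fun hh => hSsub hh hrR.1
      have her2 : E e₂ r := (hsub ⟨hrS, her⟩).2
      exact ⟨hx, Or.inr (Or.inl ⟨hSsub h2, hSt h2, rfl,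
        r, ⟨hrR.1, e₂, hSsub h2, her2⟩, her2⟩)⟩
    · exact absurd heq (hSt h1)
  -- child sets: E version from E' version
  have hcbwd : ∀ e₁ e₂, e₁ ∈ S → e₂ ∈ S →
      {u | u ∉ S ∧ ClusterEdge E T t e₁ u} ⊆ {u | u ∉ S ∧ ClusterEdge E T t e₂ u} →
      {u | u ∉ S ∧ E e₁ u} ⊆ {u | u ∉ S ∧ E e₂ u} := by
    rintro e₁ e₂ h1 h2 hsub x ⟨hx, hex⟩
    by_cases hxT : x ∈ T
    · have hx1 : x ∈ recs E T := ⟨hxT, e₁, hSsub h1, hex⟩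
      have h2' : ClusterEdge E T t e₂ t :=
        (hsub ⟨htS, Or.inr (Or.inl ⟨hSsub h1, hSt h1, rfl, x, hx1, hex⟩)⟩).2
      rcases h2' with ⟨_, _, het⟩ | ⟨_, _, _, r, hrR, her⟩ | ⟨heq, _, _, _⟩
      · exact absurd (hE _ _ het).2 ht
      · have hmem : e₂ ∈ {u | u ∉ T ∧ E u x} :=
          (hTrec r hrR x hx1) ▸ (⟨hSsub h2, her⟩ : e₂ ∈ {u | u ∉ T ∧ E u r})
        exact ⟨hx, hmem.2⟩
      · exact absurd heq (hSt h2)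
    · have h2' : ClusterEdge E T t e₂ x :=
        (hsub ⟨hx, Or.inl ⟨hSsub h1, hxT, hex⟩⟩).2
      rcases h2' with ⟨_, _, hex2⟩ | ⟨_, _, heq, _⟩ | ⟨heq, _, _, _⟩
      · exact ⟨hx, hex2⟩
      · exact absurd (hE _ _ hex).2 (heq ▸ ht)
      · exact absurd heq (hSt h2)
  constructor
  · rintro ⟨h1, h2, h3, h4, h5, h6, h7⟩
    unfold IsTransitCluster
    rw [hrec, hemi]
    refine ⟨h1, ?_, ?_, ?_, ?_, ?_, ?_⟩
    · exact ⟨fun x hx => Or.inl (hS hx), fun hsup => htS (hsup (Or.inr rfl))⟩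
    · intro r₁ hr₁ r₂ hr₂
      have hp := h3 r₁ hr₁ r₂ hr₂
      exact Set.Subset.antisymm (hpfwd r₁ r₂ hr₁.1 hr₂.1 hp.le)
        (hpfwd r₂ r₁ hr₂.1 hr₁.1 hp.ge)
    · intro e₁ he₁ e₂ he₂
      have hp := h4 e₁ he₁ e₂ he₂
      exact Set.Subset.antisymm (hcfwd e₁ e₂ he₁.1 he₂.1 hp.le)
        (hcfwd e₂ e₁ he₂.1 he₁.1 hp.ge)
    · intro x hx
      obtain ⟨w, hw, hr⟩ := h5 x hx
      exact ⟨w, hw, Relation.ReflTransGen.mono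
        (fun a b h => h.imp (hcut a b).mpr (hcut b a).mpr) _ _ hr⟩
    · intro hne r hr
      obtain ⟨e, heS, hre'⟩ := h6 hne r hr
      exact ⟨e, heS, (hreach r hr.1 e heS.1).1 hre'⟩
    · intro hne e he
      obtain ⟨r, hrS, hre'⟩ := h7 hne e he
      exact ⟨r, hrS, (hreach r hrS.1 e he.1).1 hre'⟩
  · rintro ⟨h1, h2, h3, h4, h5, h6, h7⟩
    rw [hrec] at h3 h6 h7
    rw [hemi] at h4 h6 h7
    refine ⟨h1, ?_, ?_, ?_, ?_, ?_, ?_⟩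
    · obtain ⟨x, hxT⟩ := hTne
      exact ⟨fun y hy => hSV hy, fun hsup => hSsub (hsup (hTV.subset hxT)) hxT⟩
    · intro r₁ hr₁ r₂ hr₂
      have hp := h3 r₁ hr₁ r₂ hr₂
      exact Set.Subset.antisymm (hpbwd r₁ r₂ hr₁.1 hr₂.1 hp.le)
        (hpbwd r₂ r₁ hr₂.1 hr₁.1 hp.ge)
    · intro e₁ he₁ e₂ he₂
      have hp := h4 e₁ he₁ e₂ he₂
      exact Set.Subset.antisymm (hcbwd e₁ e₂ he₁.1 he₂.1 hp.le)
        (hcbwd e₂ e₁ he₂.1 he₁.1 hp.ge)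
    · intro x hx
      obtain ⟨w, hw, hr⟩ := h5 x hx
      refine ⟨w, ?_, Relation.ReflTransGen.mono
        (fun a b h => h.imp (hcut a b).mp (hcut b a).mp) _ _ hr⟩
      rwa [hrec, hemi] at hw
    · intro hne r hr
      obtain ⟨e, heS, hre'⟩ := h6 hne r hr
      exact ⟨e, heS, (hreach r hr.1 e heS.1).2 hre'⟩
    · intro hne e he
      obtain ⟨r, hrS, hre'⟩ := h7 hne e he
      exact ⟨r, hrS, (hreach r hrS.1 e he.1).2 hre'⟩
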